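/- Let A be a smooth and structured-decomposable probabilistic circuit over variables X respecting a vtree V. Then its augmented PC A_aug over X ∪ Z is itself smooth and decomposable (indeed structured-decomposable with respect to the vtree obtained from V by attaching to each inner node v a new leaf for Z_v). -/

import Mathlib

open scoped BigOperators

/-! ### Probabilistic circuits

A probabilistic circuit is a rooted DAG of leaf, sum and product nodes.  We represent the
DAG by a finite sequence of nodes; well-formedness (`PC.WF`) requires that the children of
every node have strictly smaller index, and the root is the node of largest index. -/

inductive PCNode (ι : Type) (Val : ι → Type) (N : ℕ) where
  | leaf (v : ι) (f : Val v → ℝ)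
  | sum (ch : List (Fin N × ℝ))
  | prod (ch : List (Fin N))

namespace PCNode

variable {ι : Type} {Val : ι → Type} {N : ℕ}

def children : PCNode ι Val N → List (Fin N)
  | .leaf _ _ => []
  | .sum ch => ch.map Prod.fst
  | .prod ch => ch

def childCount : PCNode ι Val N → ℕ
  | .leaf _ _ => 0
  | .sum ch => ch.length
  | .prod ch => ch.length

def isProdB : PCNode ι Val N → Bool
  | .prod _ => true
  | _ => false

end PCNode

structure PC (ι : Type) (Val : ι → Type) where
  numNodes : ℕ
  node : Fin numNodes → PCNode ι Val numNodes

namespace PC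

variable {ι : Type} {Val : ι → Type}

/-- Acyclicity: every edge goes from a larger to a strictly smaller index. -/
def WF (C : PC ι Val) : Prop :=
  ∀ i : Fin C.numNodes, ∀ j ∈ (C.node i).children, (j : ℕ) < (i : ℕ)

/-- Fuelled evaluation of a node; for a well-formed circuit, fuel `C.numNodes` always
suffices. -/
def evalFuel (C : PC ι Val) (x : ∀ i, Val i) : ℕ → Fin C.numNodes → ℝ
  | 0, _ => 0
  | k+1, i =>
    match C.node i with
    | .leaf v f => f (x v)
    | .sum ch => (ch.map fun p => p.2 * evalFuel C x k p.1).sum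
    | .prod ch => (ch.map fun j => evalFuel C x k j).prod

def nodeEval (C : PC ι Val) (x : ∀ i, Val i) (i : Fin C.numNodes) : ℝ :=
  evalFuel C x C.numNodes i

/-- The function computed by the circuit (the value of its root node). -/
def eval (C : PC ι Val) (x : ∀ i, Val i) : ℝ :=
  if h : 0 < C.numNodes then nodeEval C x ⟨C.numNodes - 1, by omega⟩ else 0

def scopeFuel [DecidableEq ι] (C : PC ι Val) : ℕ → Fin C.numNodes → Finset ι
  | 0, _ => ∅
  | k+1, i =>
    match C.node i with
    | .leaf v _ => {v}
    | .sum ch => (ch.map fun p => scopeFuel C k p.1).foldr (· ∪ ·) ∅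
    | .prod ch => (ch.map fun j => scopeFuel C k j).foldr (· ∪ ·) ∅

/-- The scope of a node: the set of variables its subcircuit depends on. -/
def scope [DecidableEq ι] (C : PC ι Val) (i : Fin C.numNodes) : Finset ι :=
  scopeFuel C C.numNodes i

def rootScope [DecidableEq ι] (C : PC ι Val) : Finset ι :=
  if h : 0 < C.numNodes then scope C ⟨C.numNodes - 1, by omega⟩ else ∅

/-- The size of a circuit: its number of edges. -/
def numEdges (C : PC ι Val) : ℕ :=
  ∑ i : Fin C.numNodes, (C.node i).childCount

def depthFuel (C : PC ι Val) : ℕ → Fin C.numNodes → ℕ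
  | 0, _ => 0
  | k+1, i =>
    match C.node i with
    | .leaf _ _ => 0
    | .sum ch => (ch.map fun p => depthFuel C k p.1 + 1).foldr max 0
    | .prod ch => (ch.map fun j => depthFuel C k j + 1).foldr max 0

/-- The depth of a circuit: the length of the longest root-to-leaf path. -/
def depth (C : PC ι Val) : ℕ :=
  if h : 0 < C.numNodes then depthFuel C C.numNodes ⟨C.numNodes - 1, by omega⟩ else 0

/-- All children of any sum node have the same scope. -/
def Smooth [DecidableEq ι] (C : PC ι Val) : Prop :=
  ∀ (i : Fin C.numNodes) (ch : List (Fin C.numNodes × ℝ)), C.node i = .sum ch →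
    ∀ p ∈ ch, ∀ q ∈ ch, scope C p.1 = scope C q.1

/-- The children of any product node have pairwise disjoint scopes. -/
def Decomposable [DecidableEq ι] (C : PC ι Val) : Prop :=
  ∀ (i : Fin C.numNodes) (ch : List (Fin C.numNodes)), C.node i = .prod ch →
    ch.Pairwise fun a b => Disjoint (scope C a) (scope C b)

/-- Sum-node weights and leaf functions are nonnegative. -/
def NonnegWeights (C : PC ι Val) : Prop :=
  (∀ (i : Fin C.numNodes) (ch : List (Fin C.numNodes × ℝ)), C.node i = .sum ch →
      ∀ p ∈ ch, 0 ≤ p.2) ∧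
  (∀ (i : Fin C.numNodes) (v : ι) (f : Val v → ℝ), C.node i = .leaf v f → ∀ a, 0 ≤ f a)

/-- The weights of every sum node sum to one. -/
def NormalizedSums (C : PC ι Val) : Prop :=
  ∀ (i : Fin C.numNodes) (ch : List (Fin C.numNodes × ℝ)), C.node i = .sum ch →
    (ch.map Prod.snd).sum = 1

/-- Every leaf computes a probability distribution over its variable. -/
def NormalizedLeaves [∀ i, Fintype (Val i)] (C : PC ι Val) : Prop :=
  ∀ (i : Fin C.numNodes) (v : ι) (f : Val v → ℝ), C.node i = .leaf v f → ∑ a, f a = 1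

/-- Sum/leaf and product nodes alternate: children of sums are products and children of
products are sums or leaves. -/
def Alternating (C : PC ι Val) : Prop :=
  (∀ (i : Fin C.numNodes) (ch : List (Fin C.numNodes × ℝ)), C.node i = .sum ch →
      ∀ p ∈ ch, (C.node p.1).isProdB = true) ∧
  (∀ (i : Fin C.numNodes) (ch : List (Fin C.numNodes)), C.node i = .prod ch →
      ∀ j ∈ ch, (C.node j).isProdB = false)

/-- For every input, at most one child of each sum node evaluates to a nonzero value. -/
def Deterministic (C : PC ι Val) : Prop :=
  ∀ (x : ∀ i, Val i) (i : Fin C.numNodes) (ch : List (Fin C.numNodes × ℝ)),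
    C.node i = .sum ch → ∀ p ∈ ch, ∀ q ∈ ch,
      nodeEval C x p.1 ≠ 0 → nodeEval C x q.1 ≠ 0 → p.1 = q.1

/-- The number of product nodes with a given scope. -/
def prodCount [DecidableEq ι] (C : PC ι Val) (S : Finset ι) : ℕ :=
  (Finset.univ.filter fun i : Fin C.numNodes =>
    (C.node i).isProdB = true ∧ scope C i = S).card

/-- The index of a product node within the product nodes sharing its scope. -/
def idxOf [DecidableEq ι] (C : PC ι Val) (i : Fin C.numNodes) : ℕ :=
  (Finset.univ.filter fun j : Fin C.numNodes =>
    (j : ℕ) < (i : ℕ) ∧ (C.node j).isProdB = true ∧ scope C j = scope C i).card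

/-- Bundle of basic "probabilistic circuit over all the variables" conditions:
well-formed DAG, nonnegative normalized weights, normalized leaves, alternation of
sum/leaf and product nodes, and the root depending on all variables. -/
def IsPCOver [DecidableEq ι] [Fintype ι] [∀ i, Fintype (Val i)] (C : PC ι Val) : Prop :=
  C.WF ∧ C.NonnegWeights ∧ C.NormalizedSums ∧ C.NormalizedLeaves ∧ C.Alternating ∧
    C.rootScope = Finset.univ

end PC

/-! ### Vtrees -/

inductive Vtree (ι : Type) where
  | leaf (x : ι)
  | node (l r : Vtree ι)
deriving DecidableEq

namespace Vtree

variable {ι : Type}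

def varsFinset [DecidableEq ι] : Vtree ι → Finset ι
  | .leaf x => {x}
  | .node l r => varsFinset l ∪ varsFinset r

def leavesList : Vtree ι → List ι
  | .leaf x => [x]
  | .node l r => leavesList l ++ leavesList r

/-- A vtree over a set `S` of variables: its leaves are in bijection with `S`. -/
def ValidOver (T : Vtree ι) (S : Set ι) : Prop :=
  T.leavesList.Nodup ∧ ∀ x : ι, x ∈ T.leavesList ↔ x ∈ S

def numNodesV : Vtree ι → ℕ
  | .leaf _ => 1
  | .node l r => numNodesV l + numNodesV r + 1

def IsChildOf (c p : Vtree ι) : Prop :=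
  match p with
  | .leaf _ => False
  | .node l r => c = l ∨ c = r

inductive IsSubtreeOf : Vtree ι → Vtree ι → Prop
  | refl (t : Vtree ι) : IsSubtreeOf t t
  | left {s l r : Vtree ι} : IsSubtreeOf s l → IsSubtreeOf s (.node l r)
  | right {s l r : Vtree ι} : IsSubtreeOf s r → IsSubtreeOf s (.node l r)

def subtreesList : Vtree ι → List (Vtree ι)
  | .leaf x => [.leaf x]
  | .node l r => .node l r :: (subtreesList l ++ subtreesList r)

def isNodeB : Vtree ι → Bool
  | .leaf _ => false
  | .node _ _ => true

/-- The inner (non-leaf) nodes of a vtree. -/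
def innerFinset [DecidableEq ι] (V : Vtree ι) : Finset (Vtree ι) :=
  (V.subtreesList.filter fun t => t.isNodeB).toFinset

def depthV : Vtree ι → ℕ
  | .leaf _ => 0
  | .node l r => max (depthV l) (depthV r) + 1

/-- The nodes of a vtree occurring at a given depth. -/
def atDepth : Vtree ι → ℕ → Set (Vtree ι)
  | t, 0 => {t}
  | .leaf _, _+1 => ∅
  | .node l r, k+1 => atDepth l k ∪ atDepth r k

theorem numNodesV_lt_of_isChildOf {c p : Vtree ι} (h : c.IsChildOf p) :
    c.numNodesV < p.numNodesV := by
  cases p with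
  | leaf x => exact h.elim
  | node l r =>
    rcases h with h | h <;> subst h <;> simp only [numNodesV] <;> omega

end Vtree

/-- The tree `V_{v → Z_v}`, viewed as a graph: vertices are the subtrees of `V`
(inner subtrees play the role of the latent variables `Z_v`, leaves the role of the
variables `X`), with edges between each node and its children. -/
def vtreeGraph {ι : Type} (V : Vtree ι) : SimpleGraph (Vtree ι) where
  Adj s t := (s.IsChildOf t ∨ t.IsChildOf s) ∧ s.IsSubtreeOf V ∧ t.IsSubtreeOf V
  symm := by
    constructor
    rintro s t ⟨h, hs, ht⟩
    exact ⟨h.symm, ht, hs⟩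
  loopless := by
    constructor
    rintro s ⟨h, -, -⟩
    rcases h with h | h <;>
      exact absurd (Vtree.numNodesV_lt_of_isChildOf h) (lt_irrefl _)

namespace PC

variable {ι : Type} {Val : ι → Type}

/-- Structured decomposability with respect to a vtree: every product node has exactly
two children, whose scopes are the variables of the two children of an inner node of the
vtree. -/
def StructuredBy [DecidableEq ι] (C : PC ι Val) (V : Vtree ι) : Prop :=
  ∀ (i : Fin C.numNodes) (ch : List (Fin C.numNodes)), C.node i = .prod ch →
    ∃ (c₁ c₂ : Fin C.numNodes) (l r : Vtree ι), ch = [c₁, c₂] ∧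
      (Vtree.node l r).IsSubtreeOf V ∧
      scope C c₁ = l.varsFinset ∧ scope C c₂ = r.varsFinset

/-- Generalized structured decomposability (for products with arbitrarily many children):
every product node decomposes the variables of some vtree node into the variables of a
family of its subtrees. -/
def StructuredByGen [DecidableEq ι] (C : PC ι Val) (V : Vtree ι) : Prop :=
  ∀ (i : Fin C.numNodes) (ch : List (Fin C.numNodes)), C.node i = .prod ch →
    ∃ u : Vtree ι, u.IsSubtreeOf V ∧
      (∀ j ∈ ch, ∃ s : Vtree ι, s.IsSubtreeOf u ∧ scope C j = s.varsFinset) ∧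
      (ch.map fun j => scope C j).foldr (· ∪ ·) ∅ = u.varsFinset

/-- The hidden state size: the maximum number of product nodes sharing the scope of an
inner vtree node. -/
def hiddenStateSize [DecidableEq ι] (C : PC ι Val) (V : Vtree ι) : ℕ :=
  V.innerFinset.sup fun t => prodCount C t.varsFinset

end PC

/-! ### Contiguity and linear vtrees (for variables `Fin n`) -/

def IsIntervalFin {n : ℕ} (S : Finset (Fin n)) : Prop :=
  ∃ a b : ℕ, ∀ i : Fin n, i ∈ S ↔ (a ≤ (i : ℕ) ∧ (i : ℕ) ≤ b)

def PC.ContiguousPC {n : ℕ} {Val : Fin n → Type} (C : PC (Fin n) Val) : Prop :=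
  ∀ i : Fin C.numNodes, IsIntervalFin (PC.scope C i)

def Vtree.ContiguousV {n : ℕ} (V : Vtree (Fin n)) : Prop :=
  ∀ t : Vtree (Fin n), t.IsSubtreeOf V → IsIntervalFin t.varsFinset

inductive Vtree.IsLinearFrom {n : ℕ} : ℕ → Vtree (Fin n) → Prop
  | single (a : ℕ) (ha : a < n) (h : a + 1 = n) : IsLinearFrom a (.leaf ⟨a, ha⟩)
  | cons (a : ℕ) (ha : a < n) (T : Vtree (Fin n)) (h : a + 1 < n) :
      IsLinearFrom (a+1) T → IsLinearFrom a (.node (.leaf ⟨a, ha⟩) T)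

/-- The (right-)linear vtree, splitting `{Xᵢ}` from `{Xᵢ₊₁, …, Xₙ}` at each level. -/
def Vtree.IsLinear {n : ℕ} (V : Vtree (Fin n)) : Prop := Vtree.IsLinearFrom 0 V

/-! ### Blocking, covers and vtree labellings -/

/-- `C` blocks all paths between `A` and `B` in the graph `G`. -/
def SimpleGraph.BlocksSets {α : Type} (G : SimpleGraph α) (C A B : Set α) : Prop :=
  ∀ ⦃a b : α⦄, a ∈ A → b ∈ B → ∀ p : G.Walk a b, ∃ c ∈ C, c ∈ p.support

/-- A valid labelling of a target vtree `W` with respect to a (tree-shaped) graph `G`,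
where the variable `i` is represented by the vertex `xv i` and `X` is the set of all
variables.  The root is labelled `∅`, each leaf is labelled by the parent (i.e. the
neighbours) of its variable, the label of every inner node covers its variables, and the
labels of the children block their variables from the other labels. -/
structure IsValidLabelling {α ι : Type} [DecidableEq ι] (G : SimpleGraph α) (xv : ι → α)
    (X : Set ι) (W : Vtree ι) (label : Vtree ι → Set α) : Prop where
  root_empty : label W = ∅
  leaf_parent : ∀ x : ι, (Vtree.leaf x).IsSubtreeOf W →
    label (.leaf x) = {p | G.Adj (xv x) p}
  covers : ∀ l r : Vtree ι, (Vtree.node l r).IsSubtreeOf W →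
    G.BlocksSets (label (.node l r))
      (xv '' ((Vtree.node l r).varsFinset : Set ι))
      (xv '' (X \ ((Vtree.node l r).varsFinset : Set ι)))
  blocks_left : ∀ l r : Vtree ι, (Vtree.node l r).IsSubtreeOf W →
    G.BlocksSets (label l) (xv '' (l.varsFinset : Set ι)) (label r ∪ label (.node l r))
  blocks_right : ∀ l r : Vtree ι, (Vtree.node l r).IsSubtreeOf W →
    G.BlocksSets (label r) (xv '' (r.varsFinset : Set ι)) (label l ∪ label (.node l r))

/-! ### The augmented circuit -/

/-- Value types for the augmented circuit: the original variables keep their values, and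
each latent variable `Z_v` (indexed by the vtree node `v`) takes natural number values. -/
@[reducible] def augVal {ι : Type} (Val : ι → Type) : ι ⊕ Vtree ι → Type
  | .inl i => Val i
  | .inr _ => ℕ

/-- Find the subtree of a vtree with the given variable set (if any). -/
def Vtree.findByVars {ι : Type} [DecidableEq ι] : Vtree ι → Finset ι → Option (Vtree ι)
  | .leaf x, S => if S = {x} then some (.leaf x) else none
  | .node l r, S =>
      if S = (Vtree.node l r).varsFinset then some (.node l r)
      else (findByVars l S).orElse fun _ => findByVars r S

/-- The augmented circuit `A_aug` of a structured circuit: each product node `t` with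
scope `X_v` gets an additional leaf child over the latent variable `Z_v`, computing the
indicator function `1[Z_v = idx(t)]`.  (Node `2*i+1` is a copy of node `i` of the original
circuit and node `2*i` is the extra indicator leaf attached to it when `i` is a product.) -/
def PC.augment {ι : Type} {Val : ι → Type} [DecidableEq ι] (C : PC ι Val) (V : Vtree ι) :
    PC (ι ⊕ Vtree ι) (augVal Val) where
  numNodes := 2 * C.numNodes
  node := fun k =>
    if hk : (k : ℕ) % 2 = 1 then
      match C.node ⟨(k : ℕ) / 2, by have := k.isLt; omega⟩ with
      | .leaf v f => .leaf (Sum.inl v) f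
      | .sum ch => .sum (ch.map fun p =>
          ((⟨2 * (p.1 : ℕ) + 1, by have := p.1.isLt; omega⟩ : Fin (2 * C.numNodes)), p.2))
      | .prod ch => .prod ((ch.map fun (j : Fin C.numNodes) =>
          (⟨2 * (j : ℕ) + 1, by have := j.isLt; omega⟩ : Fin (2 * C.numNodes))) ++
          [⟨2 * ((k : ℕ) / 2), by have := k.isLt; omega⟩])
    else
      match C.node ⟨(k : ℕ) / 2, by have := k.isLt; omega⟩ with
      | .prod _ => .leaf
          (Sum.inr ((V.findByVars (PC.scope C ⟨(k : ℕ) / 2, by have := k.isLt; omega⟩)).getD V))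
          (fun m => if m = PC.idxOf C ⟨(k : ℕ) / 2, by have := k.isLt; omega⟩ then 1 else 0)
      | _ => .leaf (Sum.inr V) (fun _ => 1)

/-- Combine an assignment of the observed variables with an assignment of the latent
variables into an assignment for the augmented circuit. -/
def augAssign {ι : Type} {Val : ι → Type} [DecidableEq ι] (V : Vtree ι) (x : ∀ i, Val i)
    (z : ∀ t ∈ V.innerFinset, ℕ) : ∀ s : ι ⊕ Vtree ι, augVal Val s :=
  fun s => match s with
  | .inl i => x i
  | .inr t => if ht : t ∈ V.innerFinset then z t ht else 0

/-- The vtree of the augmented circuit: a new leaf for `Z_v` is attached at each inner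
node `v`. -/
def Vtree.augTree {ι : Type} : Vtree ι → Vtree (ι ⊕ Vtree ι)
  | .leaf x => .leaf (.inl x)
  | .node l r => .node (.leaf (.inr (.node l r))) (.node (augTree l) (augTree r))
set_option linter.unusedSectionVars false

namespace Vtree
variable {ι : Type} [DecidableEq ι]

theorem mem_varsFinset {x : ι} : ∀ {t : Vtree ι}, x ∈ t.varsFinset ↔ x ∈ t.leavesList
  | .leaf y => by simp [varsFinset, leavesList]
  | .node l r => by
      simp [varsFinset, leavesList, @mem_varsFinset x l, @mem_varsFinset x r]

theorem varsFinset_nonempty : ∀ (t : Vtree ι), t.varsFinset.Nonempty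
  | .leaf x => ⟨x, by simp [varsFinset]⟩
  | .node l r => by
      obtain ⟨x, hx⟩ := varsFinset_nonempty l
      exact ⟨x, by simp [varsFinset]; exact Or.inl hx⟩

theorem IsSubtreeOf.trans' {a b c : Vtree ι} (h1 : a.IsSubtreeOf b)
    (h2 : b.IsSubtreeOf c) : a.IsSubtreeOf c := by
  induction h2 with
  | refl => exact h1
  | left _ ih => exact .left ih
  | right _ ih => exact .right ih

theorem varsFinset_subset {s t : Vtree ι} (h : s.IsSubtreeOf t) :
    s.varsFinset ⊆ t.varsFinset := by
  induction h with
  | refl => exact subset_rfl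
  | left _ ih => exact ih.trans (by simp [varsFinset])
  | right _ ih => exact ih.trans (by simp [varsFinset])

theorem nodup_of_subtree {s t : Vtree ι} (h : s.IsSubtreeOf t)
    (hnd : t.leavesList.Nodup) : s.leavesList.Nodup := by
  induction h with
  | refl => exact hnd
  | left _ ih =>
      rename_i l r _
      simp only [leavesList, List.nodup_append] at hnd
      exact ih hnd.1
  | right _ ih =>
      rename_i l r _
      simp only [leavesList, List.nodup_append] at hnd
      exact ih hnd.2.1

theorem disjoint_vars {l r V : Vtree ι} (hnd : V.leavesList.Nodup)
    (h : (Vtree.node l r).IsSubtreeOf V) :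
    Disjoint l.varsFinset r.varsFinset := by
  have h2 := nodup_of_subtree h hnd
  simp only [leavesList, List.nodup_append] at h2
  rw [Finset.disjoint_left]
  intro a hal har
  exact h2.2.2 a (mem_varsFinset.mp hal) a (mem_varsFinset.mp har) rfl

theorem numNodesV_pos : ∀ (t : Vtree ι), 0 < t.numNodesV
  | .leaf _ => by simp [numNodesV]
  | .node l r => by simp [numNodesV]

theorem numNodesV_le_of_subtree {s t : Vtree ι} (h : s.IsSubtreeOf t) :
    s.numNodesV ≤ t.numNodesV := by
  induction h with
  | refl => exact le_rfl
  | left _ ih => simp only [numNodesV]; omega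
  | right _ ih => simp only [numNodesV]; omega

theorem not_node_subtree_left {l r : Vtree ι} : ¬ (Vtree.node l r).IsSubtreeOf l := by
  intro h
  have := numNodesV_le_of_subtree h
  have hr := numNodesV_pos r
  simp only [numNodesV] at this
  omega

theorem not_node_subtree_right {l r : Vtree ι} : ¬ (Vtree.node l r).IsSubtreeOf r := by
  intro h
  have := numNodesV_le_of_subtree h
  have hl := numNodesV_pos l
  simp only [numNodesV] at this
  omega

theorem findByVars_sound : ∀ {t : Vtree ι} {S : Finset ι} {u : Vtree ι},
    t.findByVars S = some u → u.IsSubtreeOf t ∧ u.varsFinset = S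
  | .leaf x, S, u => by
      simp only [findByVars]
      split
      · rename_i h
        intro hu
        injection hu with hu
        subst hu
        exact ⟨.refl _, by simp [varsFinset, h]⟩
      · intro hu; exact absurd hu (by simp)
  | .node l r, S, u => by
      simp only [findByVars]
      split
      · rename_i h
        intro hu
        injection hu with hu
        subst hu
        exact ⟨.refl _, h.symm⟩
      · intro hu
        rcases hl : findByVars l S with _ | t₁
        · rw [hl] at hu
          simp only [Option.orElse, Option.orElse_none] at hu
          obtain ⟨h1, h2⟩ := findByVars_sound (t := r) hu
          exact ⟨.right h1, h2⟩
        · rw [hl] at hu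
          simp only [Option.orElse, Option.orElse_some] at hu
          injection hu with hu
          subst hu
          obtain ⟨h1, h2⟩ := findByVars_sound (t := l) hl
          exact ⟨.left h1, h2⟩

theorem findByVars_eq : ∀ {V : Vtree ι}, V.leavesList.Nodup →
    ∀ {s : Vtree ι}, s.IsSubtreeOf V → V.findByVars s.varsFinset = some s
  | .leaf x, _, s => by
      intro hs
      cases hs
      simp [findByVars, varsFinset]
  | .node l r, hnd, s => by
      intro hs
      have hdlr : Disjoint l.varsFinset r.varsFinset := disjoint_vars hnd (.refl _)
      simp only [leavesList, List.nodup_append] at hnd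
      cases hs with
      | refl => simp [findByVars]
      | left h =>
          have hsub : s.varsFinset ⊆ l.varsFinset := varsFinset_subset h
          obtain ⟨y, hy⟩ := varsFinset_nonempty r
          have hne : s.varsFinset ≠ (Vtree.node l r).varsFinset := by
            intro heq
            have : y ∈ s.varsFinset := by
              rw [heq]; simp [varsFinset]; exact Or.inr hy
            exact (Finset.disjoint_right.mp hdlr hy) (hsub this)
          simp only [findByVars, if_neg hne]
          rw [findByVars_eq hnd.1 h]
          rfl
      | right h =>
          have hsub : s.varsFinset ⊆ r.varsFinset := varsFinset_subset h
          obtain ⟨y, hy⟩ := varsFinset_nonempty l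
          have hne : s.varsFinset ≠ (Vtree.node l r).varsFinset := by
            intro heq
            have : y ∈ s.varsFinset := by
              rw [heq]; simp [varsFinset]; exact Or.inl hy
            exact (Finset.disjoint_left.mp hdlr hy) (hsub this)
          have hnone : l.findByVars s.varsFinset = none := by
            rcases hfl : l.findByVars s.varsFinset with _ | t₁
            · rfl
            · exfalso
              obtain ⟨h1, h2⟩ := findByVars_sound hfl
              obtain ⟨y', hy'⟩ := varsFinset_nonempty t₁
              have hyl : y' ∈ l.varsFinset := varsFinset_subset h1 hy'
              have hyr : y' ∈ r.varsFinset := hsub (h2 ▸ hy')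
              exact (Finset.disjoint_left.mp hdlr hyl) hyr
          simp only [findByVars, if_neg hne]
          rw [hnone, findByVars_eq hnd.2.1 h]
          rfl

theorem vars_inj {V s t : Vtree ι} (hnd : V.leavesList.Nodup)
    (hs : s.IsSubtreeOf V) (ht : t.IsSubtreeOf V)
    (h : s.varsFinset = t.varsFinset) : s = t := by
  have h1 := findByVars_eq hnd hs
  have h2 := findByVars_eq hnd ht
  rw [h] at h1
  rw [h1] at h2
  injection h2

theorem mem_augTree_inl {x : ι} : ∀ {t : Vtree ι},
    Sum.inl x ∈ t.augTree.varsFinset ↔ x ∈ t.varsFinset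
  | .leaf y => by simp [augTree, varsFinset]
  | .node l r => by
      simp [augTree, varsFinset, @mem_augTree_inl x l, @mem_augTree_inl x r]

theorem mem_augTree_inr {u : Vtree ι} : ∀ {t : Vtree ι},
    Sum.inr u ∈ t.augTree.varsFinset ↔ (u.IsSubtreeOf t ∧ u.isNodeB = true)
  | .leaf y => by
      simp only [augTree, varsFinset, Finset.mem_singleton]
      constructor
      · intro h; exact absurd h (by simp)
      · rintro ⟨h, hb⟩; cases h; simp [isNodeB] at hb
  | .node l r => by
      simp only [augTree, varsFinset, Finset.mem_union, Finset.mem_singleton,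
        Sum.inr.injEq, @mem_augTree_inr u l, @mem_augTree_inr u r]
      constructor
      · rintro (rfl | ⟨h, hb⟩ | ⟨h, hb⟩)
        · exact ⟨.refl _, rfl⟩
        · exact ⟨.left h, hb⟩
        · exact ⟨.right h, hb⟩
      · rintro ⟨h, hb⟩
        cases h with
        | refl => exact Or.inl rfl
        | left h => exact Or.inr (Or.inl ⟨h, hb⟩)
        | right h => exact Or.inr (Or.inr ⟨h, hb⟩)

theorem augTree_subtree {s t : Vtree ι} (h : s.IsSubtreeOf t) :
    s.augTree.IsSubtreeOf t.augTree := by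
  induction h with
  | refl => exact .refl _
  | left _ ih => exact .right (.left ih)
  | right _ ih => exact .right (.right ih)

end Vtree
namespace PC
variable {ι : Type} {Val : ι → Type} [DecidableEq ι]

theorem scopeFuel_stable {C : PC ι Val} (hwf : C.WF) :
    ∀ (m : ℕ) (i : Fin C.numNodes), (i : ℕ) < m →
      ∀ k₁ k₂, (i : ℕ) < k₁ → (i : ℕ) < k₂ → C.scopeFuel k₁ i = C.scopeFuel k₂ i := by
  intro m
  induction m with
  | zero => intro i hi; omega
  | succ m ih =>
    intro i hi k₁ k₂ h₁ h₂
    obtain ⟨a, rfl⟩ : ∃ a, k₁ = a + 1 := ⟨k₁ - 1, by omega⟩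
    obtain ⟨b, rfl⟩ : ∃ b, k₂ = b + 1 := ⟨k₂ - 1, by omega⟩
    simp only [PC.scopeFuel]
    rcases h : C.node i with v | ch | ch
    · rfl
    · dsimp only
      congr 1
      apply List.map_congr_left
      intro p hp
      have hj : (p.1 : ℕ) < (i : ℕ) := by
        apply hwf i
        simp [PCNode.children, h]
        exact ⟨p.2, hp⟩
      exact ih p.1 (by omega) a b (by omega) (by omega)
    · dsimp only
      congr 1
      apply List.map_congr_left
      intro j hj'
      have hj : (j : ℕ) < (i : ℕ) := by
        apply hwf i
        simp [PCNode.children, h]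
        exact hj'
      exact ih j (by omega) a b (by omega) (by omega)

theorem scopeFuel_eq_scope {C : PC ι Val} (hwf : C.WF) (i : Fin C.numNodes)
    {k : ℕ} (hk : (i : ℕ) < k) : C.scopeFuel k i = C.scope i :=
  scopeFuel_stable hwf C.numNodes i i.isLt k C.numNodes hk i.isLt

theorem scope_of_leaf {C : PC ι Val} (hwf : C.WF) {i : Fin C.numNodes}
    {v : ι} {f : Val v → ℝ} (h : C.node i = .leaf v f) : C.scope i = {v} := by
  rw [← scopeFuel_eq_scope hwf i (k := (i : ℕ) + 1) (by omega)]
  simp only [PC.scopeFuel, h]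

theorem scope_of_sum {C : PC ι Val} (hwf : C.WF) {i : Fin C.numNodes}
    {ch : List (Fin C.numNodes × ℝ)} (h : C.node i = .sum ch) :
    C.scope i = (ch.map fun p => C.scope p.1).foldr (· ∪ ·) ∅ := by
  rw [← scopeFuel_eq_scope hwf i (k := (i : ℕ) + 1) (by omega)]
  simp only [PC.scopeFuel, h]
  congr 1
  apply List.map_congr_left
  intro p hp
  have hj : (p.1 : ℕ) < (i : ℕ) := by
    apply hwf i
    simp [PCNode.children, h]
    exact ⟨p.2, hp⟩
  exact scopeFuel_eq_scope hwf p.1 (by omega)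

theorem scope_of_prod {C : PC ι Val} (hwf : C.WF) {i : Fin C.numNodes}
    {ch : List (Fin C.numNodes)} (h : C.node i = .prod ch) :
    C.scope i = (ch.map fun j => C.scope j).foldr (· ∪ ·) ∅ := by
  rw [← scopeFuel_eq_scope hwf i (k := (i : ℕ) + 1) (by omega)]
  simp only [PC.scopeFuel, h]
  congr 1
  apply List.map_congr_left
  intro j hj'
  have hj : (j : ℕ) < (i : ℕ) := by
    apply hwf i
    simp [PCNode.children, h]
    exact hj'
  exact scopeFuel_eq_scope hwf j (by omega)

end PC

theorem foldr_union_const {α : Type} [DecidableEq α] :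
    ∀ (L : List (Finset α)) (A : Finset α), L ≠ [] → (∀ B ∈ L, B = A) →
      L.foldr (· ∪ ·) ∅ = A
  | [], _, h, _ => absurd rfl h
  | [B], A, _, hB => by simp [hB B (by simp)]
  | B :: B' :: t, A, _, hB => by
      have := foldr_union_const (B' :: t) A (by simp) fun x hx => hB x (by simp [hx])
      simp only [List.foldr_cons] at this ⊢
      rw [this, hB B (by simp), Finset.union_self]
namespace PC
variable {ι : Type} {Val : ι → Type} [DecidableEq ι]

def emb (C : PC ι Val) (V : Vtree ι) (i : Fin C.numNodes) :
    Fin (C.augment V).numNodes :=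
  ⟨2 * (i : ℕ) + 1, by have := i.isLt; simp only [PC.augment]; omega⟩

def lfn (C : PC ι Val) (V : Vtree ι) (i : Fin C.numNodes) :
    Fin (C.augment V).numNodes :=
  ⟨2 * (i : ℕ), by have := i.isLt; simp only [PC.augment]; omega⟩

theorem augment_node_emb (C : PC ι Val) (V : Vtree ι) (i : Fin C.numNodes) :
    (C.augment V).node (emb C V i) =
      match C.node i with
      | .leaf v f => .leaf (Sum.inl v) f
      | .sum ch => .sum (ch.map fun p => (emb C V p.1, p.2))
      | .prod ch => .prod ((ch.map fun j => emb C V j) ++ [lfn C V i]) := by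
  show (if hk : (2 * (i : ℕ) + 1) % 2 = 1 then _ else _) = _
  erw [dif_pos (show (2 * (i : ℕ) + 1) % 2 = 1 by omega)]
  simp only [emb, lfn]
  have h2 : (2 * (i : ℕ) + 1) / 2 = (i : ℕ) := by omega
  simp only [h2, Fin.eta]
  rfl

theorem augment_node_emb_leaf {C : PC ι Val} (V : Vtree ι) {i : Fin C.numNodes}
    {v : ι} {f : Val v → ℝ} (h : C.node i = .leaf v f) :
    (C.augment V).node (emb C V i) = .leaf (Sum.inl v) f := by
  rw [augment_node_emb, h]

theorem augment_node_emb_sum {C : PC ι Val} (V : Vtree ι) {i : Fin C.numNodes}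
    {ch : List (Fin C.numNodes × ℝ)} (h : C.node i = .sum ch) :
    (C.augment V).node (emb C V i) = .sum (ch.map fun p => (emb C V p.1, p.2)) := by
  rw [augment_node_emb, h]

theorem augment_node_emb_prod {C : PC ι Val} (V : Vtree ι) {i : Fin C.numNodes}
    {ch : List (Fin C.numNodes)} (h : C.node i = .prod ch) :
    (C.augment V).node (emb C V i) =
      .prod ((ch.map fun j => emb C V j) ++ [lfn C V i]) := by
  rw [augment_node_emb, h]

theorem augment_node_even {C : PC ι Val} (V : Vtree ι)
    (k : Fin (C.augment V).numNodes) (hk : (k : ℕ) % 2 = 0) :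
    ∃ (w : ι ⊕ Vtree ι) (f : augVal Val w → ℝ),
      (C.augment V).node k = .leaf w f := by
  have : (C.augment V).node k = (if hk : (k : ℕ) % 2 = 1 then _ else _) := rfl
  rw [this]
  erw [dif_neg (show ¬ ((k : ℕ) % 2 = 1) by omega)]
  rcases h : C.node ⟨(k : ℕ) / 2, by have := k.isLt; simp only [PC.augment] at *; omega⟩
    with v | ch | ch <;> simp only [h] <;> exact ⟨_, _, rfl⟩

theorem augment_node_lfn_prod {C : PC ι Val} (V : Vtree ι) {i : Fin C.numNodes}
    {ch : List (Fin C.numNodes)} (h : C.node i = .prod ch) :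
    (C.augment V).node (lfn C V i) =
      .leaf (Sum.inr ((V.findByVars (C.scope i)).getD V))
        (fun m => if m = C.idxOf i then 1 else 0) := by
  show (if hk : (2 * (i : ℕ)) % 2 = 1 then _ else _) = _
  erw [dif_neg (show ¬ ((2 * (i : ℕ)) % 2 = 1) by omega)]
  have h2 : (2 * (i : ℕ)) / 2 = (i : ℕ) := by omega
  simp only [lfn, Fin.val_mk, h2, Fin.eta, h]
  refine congrArg (fun X : Fin C.numNodes =>
    (PCNode.leaf (Sum.inr ((V.findByVars (C.scope X)).getD V))
      (fun m => if m = C.idxOf i then (1:ℝ) else 0) :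
      PCNode (ι ⊕ Vtree ι) (augVal Val) (C.augment V).numNodes)) (Fin.ext ?_)
  simp only [Fin.val_mk]
  omega

theorem augment_wf {C : PC ι Val} (V : Vtree ι) (hwf : C.WF) : (C.augment V).WF := by
  intro k j hj
  rcases Nat.even_or_odd (k : ℕ) with he | ho
  · obtain ⟨w, f, hn⟩ := augment_node_even V k (Nat.even_iff.mp he)
    rw [hn] at hj
    simp [PCNode.children] at hj
  · have hk2 : (k : ℕ) < 2 * C.numNodes := by have := k.isLt; simpa [PC.augment] using this
    have ho' : (k : ℕ) % 2 = 1 := Nat.odd_iff.mp ho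
    obtain ⟨i, rfl⟩ : ∃ i : Fin C.numNodes, k = emb C V i := by
      refine ⟨⟨(k : ℕ) / 2, by omega⟩, Fin.ext ?_⟩
      simp only [emb, Fin.val_mk]
      omega
    rw [augment_node_emb] at hj
    rcases h : C.node i with v | ch | ch <;> rw [h] at hj
    · simp [PCNode.children] at hj
    · simp only [PCNode.children, List.map_map, List.mem_map] at hj
      obtain ⟨p, hp, rfl⟩ := hj
      have := hwf i p.1 (by simp [PCNode.children, h]; exact ⟨p.2, hp⟩)
      simp only [emb, Function.comp]
      omega
    · simp only [PCNode.children, List.mem_append, List.mem_map, List.mem_singleton] at hj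
      rcases hj with ⟨j', hj', rfl⟩ | rfl
      · have := hwf i j' (by simp [PCNode.children, h]; exact hj')
        simp only [emb]
        omega
      · simp only [emb, lfn]
        omega
set_option linter.unusedVariables false

theorem isProdB_prod {N : ℕ} {t : PCNode ι Val N} (h : t.isProdB = true) :
    ∃ ch, t = .prod ch := by
  cases t with
  | leaf v f => simp [PCNode.isProdB] at h
  | sum ch => simp [PCNode.isProdB] at h
  | prod ch => exact ⟨ch, rfl⟩

theorem scope_lfn {C : PC ι Val} {V : Vtree ι} (hwf : C.WF) {i : Fin C.numNodes}
    {ch : List (Fin C.numNodes)} (h : C.node i = .prod ch) :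
    (C.augment V).scope (lfn C V i) =
      {Sum.inr ((V.findByVars (C.scope i)).getD V)} :=
  scope_of_leaf (augment_wf V hwf) (augment_node_lfn_prod V h)

/-- Main lemma: the scope of the copy of node `i` in the augmented circuit is the
variable set of the augmented vtree of the subtree corresponding to `i`'s scope. -/
theorem augScope {C : PC ι Val} {V : Vtree ι} (hwf : C.WF) (hsm : C.Smooth)
    (halt : C.Alternating) (hstr : C.StructuredBy V) (hnd : V.leavesList.Nodup) :
    ∀ (m : ℕ) (i : Fin C.numNodes), (i : ℕ) < m → ∀ s : Vtree ι, s.IsSubtreeOf V →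
      C.scope i = s.varsFinset →
      (C.augment V).scope (emb C V i) = s.augTree.varsFinset := by
  have hawf := augment_wf (C := C) V hwf
  intro m
  induction m with
  | zero => intro i hi; omega
  | succ m ih =>
    intro i hi s hsV hscope
    rcases h : C.node i with v | ch | ch
    · -- leaf case
      rw [scope_of_leaf hwf h] at hscope
      have hs : s = .leaf v := by
        cases s with
        | leaf x =>
            have : x ∈ ({v} : Finset ι) := by
              rw [hscope]; simp [Vtree.varsFinset]
            simp at this
            rw [this]
        | node l r =>
            exfalso
            obtain ⟨x, hx⟩ := Vtree.varsFinset_nonempty l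
            obtain ⟨y, hy⟩ := Vtree.varsFinset_nonempty r
            have hd := Vtree.disjoint_vars hnd hsV
            have hx' : x ∈ ({v} : Finset ι) := by
              rw [hscope]; simp [Vtree.varsFinset]; exact Or.inl hx
            have hy' : y ∈ ({v} : Finset ι) := by
              rw [hscope]; simp [Vtree.varsFinset]; exact Or.inr hy
            simp only [Finset.mem_singleton] at hx' hy'
            subst hx'; subst hy'
            exact (Finset.disjoint_left.mp hd hx) hy
      subst hs
      rw [scope_of_leaf hawf (augment_node_emb_leaf V h)]
      simp [Vtree.augTree, Vtree.varsFinset]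
    · -- sum case
      have hne : ch ≠ [] := by
        rintro rfl
        rw [scope_of_sum hwf h] at hscope
        obtain ⟨x, hx⟩ := Vtree.varsFinset_nonempty s
        rw [← hscope] at hx
        simp at hx
      obtain ⟨p₀, hp₀⟩ : ∃ p, p ∈ ch := List.exists_mem_of_ne_nil ch hne
      -- scope of each child equals vars s
      have hchild : ∀ p ∈ ch, C.scope p.1 = s.varsFinset := by
        intro p hp
        rw [← hscope, scope_of_sum hwf h]
        rw [foldr_union_const _ (C.scope p.1)]
        · simp only [ne_eq, List.map_eq_nil_iff]; exact hne
        · intro B hB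
          simp only [List.mem_map] at hB
          obtain ⟨q, hq, rfl⟩ := hB
          exact hsm i ch h q hq p hp
      rw [scope_of_sum hawf (augment_node_emb_sum V h)]
      rw [List.map_map]
      apply foldr_union_const
      · simp only [ne_eq, List.map_eq_nil_iff]; exact hne
      · intro B hB
        simp only [List.mem_map, Function.comp] at hB
        obtain ⟨p, hp, rfl⟩ := hB
        have hlt : (p.1 : ℕ) < (i : ℕ) := by
          apply hwf i
          simp [PCNode.children, h]
          exact ⟨p.2, hp⟩
        exact ih p.1 (by omega) s hsV (hchild p hp)
    · -- prod case
      obtain ⟨c₁, c₂, l, r, hch, hsub, hs1, hs2⟩ := hstr i ch h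
      subst hch
      have hscope' : C.scope i = (Vtree.node l r).varsFinset := by
        rw [scope_of_prod hwf h]
        simp only [List.map_cons, List.map_nil, List.foldr_cons, List.foldr_nil,
          Finset.union_empty, hs1, hs2]
        rfl
      have hseq : s = Vtree.node l r :=
        Vtree.vars_inj hnd hsV hsub (by rw [← hscope, hscope'])
      subst hseq
      have hc₁ : (c₁ : ℕ) < (i : ℕ) := hwf i c₁ (by simp [PCNode.children, h])
      have hc₂ : (c₂ : ℕ) < (i : ℕ) := hwf i c₂ (by simp [PCNode.children, h])
      have ih₁ := ih c₁ (by omega) l (Vtree.IsSubtreeOf.trans' (.left (.refl _)) hsub) hs1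
      have ih₂ := ih c₂ (by omega) r (Vtree.IsSubtreeOf.trans' (.right (.refl _)) hsub) hs2
      have hlfn : (C.augment V).scope (lfn C V i) = {Sum.inr (Vtree.node l r)} := by
        rw [scope_lfn hwf h, hscope', Vtree.findByVars_eq hnd hsub]
        rfl
      rw [scope_of_prod hawf (augment_node_emb_prod V h)]
      simp only [List.map_cons, List.map_nil, List.map_append, List.cons_append,
        List.nil_append, List.foldr_cons, List.foldr_nil, Finset.union_empty]
      rw [ih₁, ih₂, hlfn]
      ext a
      simp only [Vtree.augTree, Vtree.varsFinset, Finset.mem_union, Finset.mem_singleton]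
      tauto

end PC

/-- Let `A` be a smooth and structured-decomposable probabilistic circuit
over variables `X` respecting a vtree `V`.  Then its augmented PC `A_aug` over `X ∪ Z` is
itself smooth and decomposable — indeed structured-decomposable (in the generalized sense,
as its product nodes have three children) with respect to the vtree obtained from `V` by
attaching to each inner node `v` a new leaf for `Z_v`. -/
theorem statement1 {n : ℕ} (Val : Fin n → Type) [∀ i, Fintype (Val i)]
    (C : PC (Fin n) Val) (V : Vtree (Fin n)) (hV : V.ValidOver Set.univ)
    (hpc : C.IsPCOver) (hsm : C.Smooth) (hdec : C.Decomposable) (hstr : C.StructuredBy V) :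
    (C.augment V).Smooth ∧ (C.augment V).Decomposable ∧
      (C.augment V).StructuredByGen V.augTree := by
  obtain ⟨hwf, hnn, hns, hnl, halt, hroot⟩ := hpc
  have hnd : V.leavesList.Nodup := hV.1
  have hawf := PC.augment_wf (C := C) V hwf
  have hodd : ∀ k : Fin (C.augment V).numNodes,
      (∀ w f, (C.augment V).node k ≠ .leaf w f) →
      ∃ i : Fin C.numNodes, k = PC.emb C V i := by
    intro k hk
    rcases Nat.even_or_odd (k : ℕ) with he | ho
    · obtain ⟨w, f, hn⟩ := PC.augment_node_even V k (Nat.even_iff.mp he)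
      exact absurd hn (hk w f)
    · have ho' := Nat.odd_iff.mp ho
      have hk2 : (k : ℕ) < 2 * C.numNodes := by
        have := k.isLt; simpa [PC.augment] using this
      exact ⟨⟨(k : ℕ) / 2, by omega⟩,
        Fin.ext (by simp only [PC.emb, Fin.val_mk]; omega)⟩
  have hprodscope : ∀ (i : Fin C.numNodes) (ch : List (Fin C.numNodes)),
      C.node i = .prod ch → ∃ l r : Vtree (Fin n),
        (Vtree.node l r).IsSubtreeOf V ∧ C.scope i = (Vtree.node l r).varsFinset := by
    intro i ch h
    obtain ⟨c₁, c₂, l, r, hch, hsub, hs1, hs2⟩ := hstr i ch h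
    subst hch
    refine ⟨l, r, hsub, ?_⟩
    rw [PC.scope_of_prod hwf h]
    simp only [List.map_cons, List.map_nil, List.foldr_cons, List.foldr_nil,
      Finset.union_empty, hs1, hs2]
    rfl
  refine ⟨?_, ?_, ?_⟩
  · -- Smoothness
    intro k ch' hk
    obtain ⟨i, rfl⟩ := hodd k (fun w f hn => by
      rw [hk] at hn; cases hn)
    rw [PC.augment_node_emb] at hk
    rcases h : C.node i with v | ch | ch <;> rw [h] at hk
    · simp at hk
    case prod => simp at hk
    dsimp only at hk
    injection hk with hk
    subst hk
    intro p hp q hq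
    simp only [List.mem_map] at hp hq
    obtain ⟨p₀, hp₀, rfl⟩ := hp
    obtain ⟨q₀, hq₀, rfl⟩ := hq
    obtain ⟨chp, hchp⟩ := PC.isProdB_prod (halt.1 i ch h p₀ hp₀)
    obtain ⟨l, r, hsub, hscp⟩ := hprodscope p₀.1 chp hchp
    have hscq : C.scope q₀.1 = (Vtree.node l r).varsFinset := by
      rw [hsm i ch h q₀ hq₀ p₀ hp₀, hscp]
    have h1 := PC.augScope hwf hsm halt hstr hnd C.numNodes p₀.1 p₀.1.isLt
      (Vtree.node l r) hsub hscp
    have h2 := PC.augScope hwf hsm halt hstr hnd C.numNodes q₀.1 q₀.1.isLt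
      (Vtree.node l r) hsub hscq
    rw [h1, h2]
  · -- Decomposability
    intro k ch' hk
    obtain ⟨i, rfl⟩ := hodd k (fun w f hn => by
      rw [hk] at hn; cases hn)
    rw [PC.augment_node_emb] at hk
    rcases h : C.node i with v | ch | ch <;> rw [h] at hk
    · simp at hk
    · simp at hk
    dsimp only at hk
    injection hk with hk
    subst hk
    obtain ⟨c₁, c₂, l, r, hch, hsub, hs1, hs2⟩ := hstr i ch h
    subst hch
    obtain ⟨l', r', hsub', hscpi⟩ := hprodscope i _ h
    have hll : Vtree.node l' r' = Vtree.node l r := by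
      apply Vtree.vars_inj hnd hsub' hsub
      rw [← hscpi, PC.scope_of_prod hwf h]
      simp only [List.map_cons, List.map_nil, List.foldr_cons, List.foldr_nil,
        Finset.union_empty, hs1, hs2]
      rfl
    rw [hll] at hscpi
    have hA := PC.augScope hwf hsm halt hstr hnd C.numNodes c₁ c₁.isLt l
      (Vtree.IsSubtreeOf.trans' (.left (.refl _)) hsub) hs1
    have hB := PC.augScope hwf hsm halt hstr hnd C.numNodes c₂ c₂.isLt r
      (Vtree.IsSubtreeOf.trans' (.right (.refl _)) hsub) hs2
    have hC : (C.augment V).scope (PC.lfn C V i) = {Sum.inr (Vtree.node l r)} := by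
      rw [PC.scope_lfn hwf h, hscpi, Vtree.findByVars_eq hnd hsub]
      rfl
    have hd : Disjoint l.varsFinset r.varsFinset := Vtree.disjoint_vars hnd hsub
    have dAB : Disjoint l.augTree.varsFinset r.augTree.varsFinset := by
      rw [Finset.disjoint_left]
      rintro (x | u) hal har
      · exact (Finset.disjoint_left.mp hd (Vtree.mem_augTree_inl.mp hal))
          (Vtree.mem_augTree_inl.mp har)
      · obtain ⟨hul, _⟩ := Vtree.mem_augTree_inr.mp hal
        obtain ⟨hur, _⟩ := Vtree.mem_augTree_inr.mp har
        obtain ⟨y, hy⟩ := Vtree.varsFinset_nonempty u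
        exact (Finset.disjoint_left.mp hd (Vtree.varsFinset_subset hul hy))
          (Vtree.varsFinset_subset hur hy)
    have dAl : Sum.inr (Vtree.node l r) ∉ l.augTree.varsFinset := by
      intro hmem
      exact Vtree.not_node_subtree_left (Vtree.mem_augTree_inr.mp hmem).1
    have dBl : Sum.inr (Vtree.node l r) ∉ r.augTree.varsFinset := by
      intro hmem
      exact Vtree.not_node_subtree_right (Vtree.mem_augTree_inr.mp hmem).1
    simp only [List.map_cons, List.map_nil, List.cons_append, List.nil_append]
    refine List.Pairwise.cons ?_ (List.Pairwise.cons ?_ (List.pairwise_singleton _ _))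
    · intro b hb
      simp only [List.mem_cons, List.not_mem_nil, or_false] at hb
      rcases hb with rfl | rfl
      · rw [hA, hB]; exact dAB
      · rw [hA, hC]; exact Finset.disjoint_singleton_right.mpr dAl
    · intro b hb
      simp only [List.mem_cons, List.not_mem_nil, or_false] at hb
      subst hb
      rw [hB, hC]; exact Finset.disjoint_singleton_right.mpr dBl
  · -- StructuredByGen
    intro k ch' hk
    obtain ⟨i, rfl⟩ := hodd k (fun w f hn => by
      rw [hk] at hn; cases hn)
    rw [PC.augment_node_emb] at hk
    rcases h : C.node i with v | ch | ch <;> rw [h] at hk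
    · simp at hk
    · simp at hk
    dsimp only at hk
    injection hk with hk
    subst hk
    obtain ⟨c₁, c₂, l, r, hch, hsub, hs1, hs2⟩ := hstr i ch h
    subst hch
    obtain ⟨l', r', hsub', hscpi⟩ := hprodscope i _ h
    have hll : Vtree.node l' r' = Vtree.node l r := by
      apply Vtree.vars_inj hnd hsub' hsub
      rw [← hscpi, PC.scope_of_prod hwf h]
      simp only [List.map_cons, List.map_nil, List.foldr_cons, List.foldr_nil,
        Finset.union_empty, hs1, hs2]
      rfl
    rw [hll] at hscpi
    have hA := PC.augScope hwf hsm halt hstr hnd C.numNodes c₁ c₁.isLt l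
      (Vtree.IsSubtreeOf.trans' (.left (.refl _)) hsub) hs1
    have hB := PC.augScope hwf hsm halt hstr hnd C.numNodes c₂ c₂.isLt r
      (Vtree.IsSubtreeOf.trans' (.right (.refl _)) hsub) hs2
    have hC : (C.augment V).scope (PC.lfn C V i) = {Sum.inr (Vtree.node l r)} := by
      rw [PC.scope_lfn hwf h, hscpi, Vtree.findByVars_eq hnd hsub]
      rfl
    refine ⟨(Vtree.node l r).augTree, Vtree.augTree_subtree hsub, ?_, ?_⟩
    · intro j hj
      simp only [List.map_cons, List.map_nil, List.cons_append, List.nil_append,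
        List.mem_cons, List.not_mem_nil, or_false] at hj
      rcases hj with rfl | rfl | rfl
      · exact ⟨l.augTree, .right (.left (.refl _)), hA⟩
      · exact ⟨r.augTree, .right (.right (.refl _)), hB⟩
      · exact ⟨.leaf (.inr (.node l r)), .left (.refl _), by rw [hC]; rfl⟩
    · simp only [List.map_cons, List.map_nil, List.cons_append, List.nil_append,
        List.foldr_cons, List.foldr_nil, Finset.union_empty]
      rw [hA, hB, hC]
      ext a
      simp only [Vtree.augTree, Vtree.varsFinset, Finset.mem_union, Finset.mem_singleton]
      tauto
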